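/- Every triangle-free graph with no induced path on r vertices is (r-1)-colourable, for r ≥ 3. -/

import Mathlib

open Relation

namespace Stmt6Aux

variable {V : Type*}

/-- one step of adjacency inside a set -/
def Step (G : SimpleGraph V) (s : Set V) (a b : V) : Prop := G.Adj a b ∧ a ∈ s ∧ b ∈ s

/-- reachability inside a set -/
def R (G : SimpleGraph V) (s : Set V) : V → V → Prop := ReflTransGen (Step G s)

lemma step_symm (G : SimpleGraph V) (s : Set V) : Symmetric (Step G s) :=
  fun _ _ ⟨h, ha, hb⟩ => ⟨h.symm, hb, ha⟩

lemma R_symm {G : SimpleGraph V} {s : Set V} {a b : V} (h : R G s a b) : R G s b a :=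
  haveI : Std.Symm (Step G s) := ⟨fun _ _ hh => step_symm G s hh⟩
  (ReflTransGen.symmetric (r := Step G s)).symm _ _ h

/-- connected component of `x` inside `s` -/
def Comp (G : SimpleGraph V) (s : Set V) (x : V) : Set V := {y | y ∈ s ∧ R G s x y}

def ProperOn (G : SimpleGraph V) (f : V → ℕ) (s : Set V) : Prop :=
  ∀ ⦃x⦄, x ∈ s → ∀ ⦃y⦄, y ∈ s → G.Adj x y → f x ≠ f y

def ColOn (G : SimpleGraph V) (s : Set V) (n : ℕ) : Prop :=
  ∃ f : V → ℕ, ProperOn G f s ∧ ∀ x ∈ s, f x < n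

lemma comp_eq_adj {G : SimpleGraph V} {s : Set V} {x y : V} (hx : x ∈ s) (hy : y ∈ s)
    (h : G.Adj x y) : Comp G s x = Comp G s y := by
  ext z
  simp only [Comp, Set.mem_setOf_eq]
  constructor
  · rintro ⟨hz, hR⟩
    exact ⟨hz, ReflTransGen.trans (ReflTransGen.single ⟨h.symm, hy, hx⟩) hR⟩
  · rintro ⟨hz, hR⟩
    exact ⟨hz, ReflTransGen.trans (ReflTransGen.single ⟨h, hx, hy⟩) hR⟩

lemma compConn {G : SimpleGraph V} {s : Set V} {x : V} :
    ∀ {y}, R G s x y → R G (Comp G s x) x y := by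
  intro y h
  induction h with
  | refl => exact ReflTransGen.refl
  | tail hxb hbc ih =>
    exact ih.tail ⟨hbc.1, ⟨hbc.2.1, hxb⟩, ⟨hbc.2.2, hxb.tail hbc⟩⟩

lemma compConn' {G : SimpleGraph V} {s : Set V} {x a b : V}
    (ha : a ∈ Comp G s x) (hb : b ∈ Comp G s x) : R G (Comp G s x) a b :=
  ReflTransGen.trans (R_symm (compConn ha.2)) (compConn hb.2)

lemma glueComp {G : SimpleGraph V} {s : Set V} {n : ℕ}
    (h : ∀ x ∈ s, ColOn G (Comp G s x) n) : ColOn G s n := by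
  classical
  set F : Set V → V → ℕ := fun t => if h : ColOn G t n then h.choose else fun _ => 0 with hF
  have key : ∀ (t : Set V) (ht : ColOn G t n),
      ProperOn G (F t) t ∧ ∀ x ∈ t, F t x < n := by
    intro t ht
    have : F t = ht.choose := by simp [hF, dif_pos ht]
    rw [this]
    exact ht.choose_spec
  refine ⟨fun x => F (Comp G s x) x, ?_, ?_⟩
  · intro x hx y hy hadj
    have hco : Comp G s x = Comp G s y := comp_eq_adj hx hy hadj
    have hk := key (Comp G s x) (h x hx)
    have hxm : x ∈ Comp G s x := ⟨hx, ReflTransGen.refl⟩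
    have hym : y ∈ Comp G s x := ⟨hy, ReflTransGen.single ⟨hadj, hx, hy⟩⟩
    have hne := hk.1 hxm hym hadj
    show F (Comp G s x) x ≠ F (Comp G s y) y
    rw [← hco]
    exact hne
  · intro x hx
    exact (key (Comp G s x) (h x hx)).2 x ⟨hx, ReflTransGen.refl⟩

lemma addIndep {G : SimpleGraph V} {s t : Set V} {n : ℕ} (hcol : ColOn G s n)
    (hind : ∀ x ∈ t, ∀ y ∈ t, ¬ G.Adj x y) : ColOn G (s ∪ t) (n + 1) := by
  classical
  obtain ⟨f, hf, hb⟩ := hcol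
  refine ⟨fun x => if x ∈ t then n else f x, ?_, ?_⟩
  · intro x hx y hy hadj
    by_cases hxt : x ∈ t <;> by_cases hyt : y ∈ t <;> simp only [hxt, hyt, if_pos, if_neg,
      if_true, if_false]
    · exact absurd hadj (hind x hxt y hyt)
    · have hys : y ∈ s := hy.resolve_right hyt
      exact fun hh => absurd hh.symm (Nat.ne_of_lt (hb y hys))
    · have hxs : x ∈ s := hx.resolve_right hxt
      exact Nat.ne_of_lt (hb x hxs)
    · exact hf (hx.resolve_right hxt) (hy.resolve_right hyt) hadj
  · intro x hx
    by_cases hxt : x ∈ t <;> simp only [hxt, if_true, if_false]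
    · omega
    · exact Nat.lt_succ_of_lt (hb x (hx.resolve_right hxt))

lemma exit {G : SimpleGraph V} {s s' : Set V} {x1 : V} {a b : V}
    (hR : R G s a b) (hb : b ∉ Comp G s' x1) (ha : a ∈ Comp G s' x1) :
    ∃ u v, u ∈ Comp G s' x1 ∧ v ∈ s ∧ v ∉ s' ∧ G.Adj u v := by
  induction hR using ReflTransGen.head_induction_on with
  | refl => exact absurd ha hb
  | @head a c hstep htail ih =>
    by_cases hc : c ∈ Comp G s' x1
    · exact ih hc
    · refine ⟨a, c, ha, hstep.2.2, ?_, hstep.1⟩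
      intro hcs'
      by_cases has' : a ∈ s'
      · exact hc ⟨hcs', ha.2.tail ⟨hstep.1, has', hcs'⟩⟩
      · exact has' ha.1

lemma indep_nbhd {G : SimpleGraph V} (htri : G.CliqueFree 3) {q a b : V}
    (h1 : G.Adj q a) (h2 : G.Adj q b) : ¬ G.Adj a b := by
  classical
  intro h
  exact htri {q, a, b} (SimpleGraph.is3Clique_triple_iff.2 ⟨h1, h2, h⟩)

lemma main {G : SimpleGraph V} (htri : G.CliqueFree 3) :
    ∀ (n : ℕ) (s : Set V) (q : V), q ∉ s →
    (∀ a ∈ s, ∀ b ∈ s, R G s a b) →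
    (∃ x ∈ s, G.Adj q x) → ¬ ColOn G s n →
    ∃ p : ℕ → V, (∀ i ≤ n, p i ∈ s) ∧
      (∀ i j, i ≤ n → j ≤ n → p i = p j → i = j) ∧
      (∀ i j, i ≤ n → j ≤ n → (G.Adj (p i) (p j) ↔ (j = i + 1 ∨ i = j + 1))) ∧
      G.Adj q (p 0) ∧ (∀ i, 1 ≤ i → i ≤ n → ¬ G.Adj q (p i)) := by
  intro n
  induction n with
  | zero =>
    intro s q _ _ hadj _
    obtain ⟨x, hxs, hqx⟩ := hadj
    refine ⟨fun _ => x, ?_, ?_, ?_, hqx, ?_⟩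
    · intro i _; exact hxs
    · intro i j hi hj _; omega
    · intro i j hi hj
      interval_cases i
      interval_cases j
      simp [G.irrefl]
    · intro i h1 h2; omega
  | succ n IH =>
    intro s q hq hconn hadj hcol
    set Nq : Set V := {x | x ∈ s ∧ G.Adj q x} with hNq
    set s' : Set V := s \ Nq with hs'
    have hNqs : Nq ⊆ s := fun x hx => hx.1
    have hunion : s' ∪ Nq = s := Set.diff_union_of_subset hNqs
    have hNind : ∀ x ∈ Nq, ∀ y ∈ Nq, ¬ G.Adj x y :=
      fun x hx y hy => indep_nbhd htri hx.2 hy.2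
    -- find a badly-colorable component of s'
    have hbad : ∃ x1 ∈ s', ¬ ColOn G (Comp G s' x1) n := by
      by_contra hall
      push_neg at hall
      have h1 : ColOn G s' n := glueComp (fun x hx => hall x hx)
      have h2 : ColOn G (s' ∪ Nq) (n + 1) := addIndep h1 hNind
      rw [hunion] at h2
      exact hcol h2
    obtain ⟨x1, hx1s', hDbad⟩ := hbad
    set D : Set V := Comp G s' x1 with hD
    have hDs' : D ⊆ s' := fun y hy => hy.1
    obtain ⟨xq, hxqs, hqxq⟩ := hadj
    have hxqNq : xq ∈ Nq := ⟨hxqs, hqxq⟩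
    have hxqD : xq ∉ D := fun h => (hDs' h).2 hxqNq
    have hx1D : x1 ∈ D := ⟨hx1s', ReflTransGen.refl⟩
    obtain ⟨u, w, huD, hws, hws', huw⟩ :=
      exit (hconn x1 (hx1s'.1) xq hxqs) hxqD hx1D
    have hwNq : w ∈ Nq := by
      by_contra hw
      exact hws' ⟨hws, hw⟩
    have hwD : w ∉ D := fun h => (hDs' h).2 hwNq
    obtain ⟨p, hmem, hinj, hadjiff, hhead, htail⟩ :=
      IH D w hwD (fun a ha b hb => compConn' ha hb) ⟨u, huD, huw.symm⟩ hDbad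
    refine ⟨fun i => if i = 0 then w else p (i - 1), ?_, ?_, ?_, ?_, ?_⟩
    · intro i hi
      by_cases h0 : i = 0 <;> simp only [h0, if_true, if_false, if_pos, if_neg]
      · exact hNqs hwNq
      · exact (hDs' (hmem (i - 1) (by omega))).1
    · intro i j hi hj heq
      by_cases h0 : i = 0 <;> by_cases h1 : j = 0 <;>
        simp only [h0, h1, if_true, if_false, if_pos, if_neg] at heq
      · omega
      · exact absurd (heq ▸ hmem (j - 1) (by omega)) hwD
      · exact absurd (heq ▸ hmem (i - 1) (by omega)) hwD
      · have := hinj (i - 1) (j - 1) (by omega) (by omega) heq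
        omega
    · intro i j hi hj
      by_cases h0 : i = 0 <;> by_cases h1 : j = 0 <;>
        simp only [h0, h1, if_true, if_false, if_pos, if_neg]
      · simp [G.irrefl]
      · constructor
        · intro hadj2
          by_cases hj1 : j = 1
          · omega
          · exact absurd hadj2 (htail (j - 1) (by omega) (by omega))
        · intro hc
          have hj1 : j = 1 := by omega
          subst hj1
          exact hhead
      · rw [G.adj_comm]
        constructor
        · intro hadj2
          by_cases hi1 : i = 1
          · omega
          · exact absurd hadj2 (htail (i - 1) (by omega) (by omega))
        · intro hc
          have hi1 : i = 1 := by omega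
          subst hi1
          exact hhead
      · have := hadjiff (i - 1) (j - 1) (by omega) (by omega)
        rw [this]
        omega
    · simp only [if_pos rfl]
      exact hwNq.2
    · intro i h1 h2
      simp only [if_neg (by omega : ¬ i = 0)]
      intro hadj2
      have hm : p (i - 1) ∈ s' := hDs' (hmem (i - 1) (by omega))
      exact hm.2 ⟨hm.1, hadj2⟩

end Stmt6Aux

/-- Every triangle-free graph with no induced path on `r` vertices is `(r-1)`-colourable,
for `r ≥ 3`. -/
theorem stmt6 {V : Type*} [Fintype V] (G : SimpleGraph V) (r : ℕ) (hr : 3 ≤ r)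
    (htri : G.CliqueFree 3)
    (hP : IsEmpty (SimpleGraph.pathGraph r ↪g G)) :
    G.Colorable (r - 1) := by
  classical
  open Stmt6Aux in
  by_contra hcol'
  obtain ⟨n, rfl⟩ : ∃ n, r = n + 3 := ⟨r - 3, by omega⟩
  have hColOn : ¬ ColOn G Set.univ (n + 2) := by
    rintro ⟨f, hf, hb⟩
    refine hcol' ?_
    have : n + 3 - 1 = n + 2 := by omega
    rw [this]
    exact ⟨SimpleGraph.Coloring.mk (fun v => (⟨f v, hb v trivial⟩ : Fin (n + 2)))
      (fun {a b} hab h => hf trivial trivial hab (congrArg Fin.val h))⟩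
  -- bad component C
  have hbadC : ∃ x0, ¬ ColOn G (Comp G Set.univ x0) (n + 2) := by
    by_contra hall
    push_neg at hall
    exact hColOn (glueComp (fun x _ => hall x))
  obtain ⟨z, hCbad⟩ := hbadC
  set C : Set V := Comp G Set.univ z with hC
  have hzC : z ∈ C := ⟨trivial, ReflTransGen.refl⟩
  set Nz : Set V := {y | y ∈ C ∧ G.Adj z y} with hNz
  set s₁ : Set V := C \ ({z} ∪ Nz) with hs₁
  have hs₁C : s₁ ⊆ C := fun y hy => hy.1
  have hNzC : Nz ⊆ C := fun y hy => hy.1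
  have hNind : ∀ x ∈ Nz, ∀ y ∈ Nz, ¬ G.Adj x y :=
    fun x hx y hy => indep_nbhd htri hx.2 hy.2
  have hbadD : ∃ x1 ∈ s₁, ¬ ColOn G (Comp G s₁ x1) n := by
    by_contra hall
    push_neg at hall
    have h1 : ColOn G s₁ n := glueComp (fun x hx => hall x hx)
    have h2 : ColOn G (s₁ ∪ Nz) (n + 1) := addIndep h1 hNind
    have h3 : ColOn G ((s₁ ∪ Nz) ∪ {z}) (n + 2) :=
      addIndep h2 (by rintro x rfl y rfl; exact G.irrefl)
    have heq : (s₁ ∪ Nz) ∪ {z} = C := by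
      apply Set.Subset.antisymm
      · rintro x (hx | hx)
        · rcases hx with hx | hx
          · exact hx.1
          · exact hx.1
        · rcases hx; exact hzC
      · intro x hx
        by_cases h1' : x = z
        · right; exact h1'
        · by_cases h2' : x ∈ Nz
          · left; right; exact h2'
          · left; left; exact ⟨hx, by rintro (h | h); exact h1' h; exact h2' h⟩
    rw [heq] at h3
    exact hCbad h3
  obtain ⟨x1, hx1s₁, hDbad⟩ := hbadD
  set D : Set V := Comp G s₁ x1 with hD
  have hDs₁ : D ⊆ s₁ := fun y hy => hy.1
  have hx1D : x1 ∈ D := ⟨hx1s₁, ReflTransGen.refl⟩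
  have hzD : z ∉ D := fun h => (hDs₁ h).2 (Or.inl rfl)
  have hCconn : ∀ a ∈ C, ∀ b ∈ C, R G C a b := fun a ha b hb => compConn' ha hb
  obtain ⟨u, w, huD, hwC, hws₁, huw⟩ :=
    exit (hCconn x1 (hs₁C hx1s₁) z hzC) hzD hx1D
  have hwNz : w ∈ Nz := by
    have : w ∈ ({z} ∪ Nz : Set V) := by
      by_contra hw
      exact hws₁ ⟨hwC, hw⟩
    rcases this with h | h
    · rcases h
      exact absurd ⟨(hDs₁ huD).1, huw.symm⟩ ((hDs₁ huD).2 ∘ Or.inr)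
    · exact h
  have hwD : w ∉ D := fun h => (hDs₁ h).2 (Or.inr hwNz)
  obtain ⟨p, hmem, hinj, hadjiff, hhead, htail⟩ :=
    main htri n D w hwD (fun a ha b hb => compConn' ha hb) ⟨u, huD, huw.symm⟩ hDbad
  -- build the embedding
  have hzw : G.Adj z w := hwNz.2
  have hznp : ∀ i ≤ n, ¬ G.Adj z (p i) := by
    intro i hi hadj2
    have hm : p i ∈ s₁ := hDs₁ (hmem i hi)
    exact hm.2 (Or.inr ⟨hm.1, hadj2⟩)
  have hzne : ∀ i ≤ n, z ≠ p i := by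
    intro i hi h
    exact (hDs₁ (hmem i hi)).2 (Or.inl h.symm)
  have hwne : ∀ i ≤ n, w ≠ p i := by
    intro i hi h
    exact hwD (h ▸ hmem i hi)
  set e : Fin (n + 3) → V := fun i =>
    if i.val = 0 then z else if i.val = 1 then w else p (i.val - 2) with he
  have e0 : ∀ a : Fin (n + 3), a.val = 0 → e a = z := by
    intro a ha; simp only [he]; rw [if_pos ha]
  have e1 : ∀ a : Fin (n + 3), a.val = 1 → e a = w := by
    intro a ha; simp only [he]; rw [if_neg (by omega), if_pos ha]
  have e2 : ∀ a : Fin (n + 3), 2 ≤ a.val → e a = p (a.val - 2) := by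
    intro a ha
    simp only [he]
    rw [if_neg (by omega), if_neg (by omega)]
  have cases3 : ∀ a : Fin (n + 3), a.val = 0 ∨ a.val = 1 ∨ (2 ≤ a.val ∧ a.val ≤ n + 2) := by
    intro a
    have := a.isLt
    omega
  have hinj' : Function.Injective e := by
    intro a b hab
    rcases cases3 a with ha | ha | ha <;> rcases cases3 b with hb | hb | hb
    · exact Fin.ext (by omega)
    · rw [e0 a ha, e1 b hb] at hab
      exact absurd hab hzw.ne
    · rw [e0 a ha, e2 b hb.1] at hab
      exact absurd hab (hzne _ (by omega))
    · rw [e1 a ha, e0 b hb] at hab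
      exact absurd hab.symm hzw.ne
    · exact Fin.ext (by omega)
    · rw [e1 a ha, e2 b hb.1] at hab
      exact absurd hab (hwne _ (by omega))
    · rw [e2 a ha.1, e0 b hb] at hab
      exact absurd hab.symm (hzne _ (by omega))
    · rw [e2 a ha.1, e1 b hb] at hab
      exact absurd hab.symm (hwne _ (by omega))
    · rw [e2 a ha.1, e2 b hb.1] at hab
      have := hinj (a.val - 2) (b.val - 2) (by omega) (by omega) hab
      exact Fin.ext (by omega)
  have hrel : ∀ a b : Fin (n + 3), G.Adj (e a) (e b) ↔ (SimpleGraph.pathGraph (n + 3)).Adj a b := by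
    intro a b
    rw [SimpleGraph.pathGraph_adj]
    rcases cases3 a with ha | ha | ha <;> rcases cases3 b with hb | hb | hb
    · rw [e0 a ha, e0 b hb]
      exact iff_of_false (G.irrefl) (by omega)
    · rw [e0 a ha, e1 b hb]
      exact iff_of_true hzw (by omega)
    · rw [e0 a ha, e2 b hb.1]
      exact iff_of_false (hznp _ (by omega)) (by omega)
    · rw [e1 a ha, e0 b hb]
      exact iff_of_true hzw.symm (by omega)
    · rw [e1 a ha, e1 b hb]
      exact iff_of_false (G.irrefl) (by omega)
    · rw [e1 a ha, e2 b hb.1]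
      constructor
      · intro h
        by_cases hb2 : b.val = 2
        · omega
        · exact absurd h (htail (b.val - 2) (by omega) (by omega))
      · intro h
        have hb2 : b.val - 2 = 0 := by omega
        rw [hb2]
        exact hhead
    · rw [e2 a ha.1, e0 b hb]
      exact iff_of_false (fun h => hznp _ (by omega) h.symm) (by omega)
    · rw [e2 a ha.1, e1 b hb]
      constructor
      · intro h
        by_cases ha2 : a.val = 2
        · omega
        · exact absurd h.symm (htail (a.val - 2) (by omega) (by omega))
      · intro h
        have ha2 : a.val - 2 = 0 := by omega
        rw [ha2]
        exact hhead.symm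
    · rw [e2 a ha.1, e2 b hb.1]
      rw [hadjiff (a.val - 2) (b.val - 2) (by omega) (by omega)]
      omega
  exact hP.false ⟨⟨e, hinj'⟩, hrel _ _⟩
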